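/- If T : c₀ → Y is a bounded linear operator into a Banach space Y such that there exist constants A, B > 0 with A‖x‖ ≤ ‖Tx‖ ≤ B‖x‖ for every x in the positive cone of c₀, then c₀ embeds isomorphically into Y. -/

import Mathlib

open Filter Topology

noncomputable section

/-- A continuous linear map between Banach lattices is *positive* if it maps the
positive cone into the positive cone. -/
def IsPositiveOp {E F : Type*} [NormedAddCommGroup E] [Lattice E] [HasSolidNorm E] [IsOrderedAddMonoid E] [NormedSpace ℝ E]
    [NormedAddCommGroup F] [Lattice F] [HasSolidNorm F] [IsOrderedAddMonoid F] [NormedSpace ℝ F] (T : E →L[ℝ] F) : Prop :=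
  ∀ x : E, 0 ≤ x → 0 ≤ T x

/-- `T` is a regular operator: a difference of two positive operators. -/
def IsRegularOp {E F : Type*} [NormedAddCommGroup E] [Lattice E] [HasSolidNorm E] [IsOrderedAddMonoid E] [NormedSpace ℝ E]
    [NormedAddCommGroup F] [Lattice F] [HasSolidNorm F] [IsOrderedAddMonoid F] [NormedSpace ℝ F] (T : E →L[ℝ] F) : Prop :=
  ∃ S₁ S₂ : E →L[ℝ] F, IsPositiveOp S₁ ∧ IsPositiveOp S₂ ∧ T = S₁ - S₂

/-- `T` belongs to `K^r(E,F)`: a difference of two positive compact operators. -/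
def IsCompactRegOp {E F : Type*} [NormedAddCommGroup E] [Lattice E] [HasSolidNorm E] [IsOrderedAddMonoid E] [NormedSpace ℝ E]
    [NormedAddCommGroup F] [Lattice F] [HasSolidNorm F] [IsOrderedAddMonoid F] [NormedSpace ℝ F] (T : E →L[ℝ] F) : Prop :=
  ∃ S₁ S₂ : E →L[ℝ] F, IsPositiveOp S₁ ∧ IsPositiveOp S₂ ∧
    IsCompactOperator ⇑S₁ ∧ IsCompactOperator ⇑S₂ ∧ T = S₁ - S₂

/-- The regular norm `‖T‖_r = inf {‖S‖ : S ≥ ±T}`. -/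
def regNorm {E F : Type*} [NormedAddCommGroup E] [Lattice E] [HasSolidNorm E] [IsOrderedAddMonoid E] [NormedSpace ℝ E]
    [NormedAddCommGroup F] [Lattice F] [HasSolidNorm F] [IsOrderedAddMonoid F] [NormedSpace ℝ F] (T : E →L[ℝ] F) : ℝ :=
  sInf {c : ℝ | ∃ S : E →L[ℝ] F, IsPositiveOp (S - T) ∧ IsPositiveOp (S + T) ∧ ‖S‖ = c}

/-- The k-norm `‖T‖_k = inf {‖S‖ : S ∈ K^r(E,F), S ≥ ±T}`. -/
def kNorm {E F : Type*} [NormedAddCommGroup E] [Lattice E] [HasSolidNorm E] [IsOrderedAddMonoid E] [NormedSpace ℝ E]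
    [NormedAddCommGroup F] [Lattice F] [HasSolidNorm F] [IsOrderedAddMonoid F] [NormedSpace ℝ F] (T : E →L[ℝ] F) : ℝ :=
  sInf {c : ℝ | ∃ S : E →L[ℝ] F, IsCompactRegOp S ∧
    IsPositiveOp (S - T) ∧ IsPositiveOp (S + T) ∧ ‖S‖ = c}

/-- The order on operators: `T ≤ S` iff `T x ≤ S x` for all `x ≥ 0`. -/
def OpLE {E F : Type*} [NormedAddCommGroup E] [Lattice E] [HasSolidNorm E] [IsOrderedAddMonoid E] [NormedSpace ℝ E]
    [NormedAddCommGroup F] [Lattice F] [HasSolidNorm F] [IsOrderedAddMonoid F] [NormedSpace ℝ F] (T S : E →L[ℝ] F) : Prop :=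
  ∀ x : E, 0 ≤ x → T x ≤ S x

/-- A Banach lattice is a KB-space if every norm-bounded increasing sequence of
positive elements converges in norm. -/
def IsKBSpace (F : Type*) [NormedAddCommGroup F] [Lattice F] [HasSolidNorm F] [IsOrderedAddMonoid F] : Prop :=
  ∀ f : ℕ → F, Monotone f → (∀ n, 0 ≤ f n) → (∃ C, ∀ n, ‖f n‖ ≤ C) →
    ∃ y, Tendsto f atTop (𝓝 y)

/-- An atom of a Banach lattice. -/
def IsLatticeAtom {E : Type*} [NormedAddCommGroup E] [Lattice E] [HasSolidNorm E] [IsOrderedAddMonoid E] [NormedSpace ℝ E] (e : E) : Prop :=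
  0 < e ∧ ∀ x : E, 0 ≤ x → x ≤ e → ∃ t : ℝ, x = t • e

/-- An atomic Banach lattice: every nonzero positive element dominates an atom. -/
def IsAtomicLattice (E : Type*) [NormedAddCommGroup E] [Lattice E] [HasSolidNorm E] [IsOrderedAddMonoid E] [NormedSpace ℝ E] : Prop :=
  ∀ x : E, 0 < x → ∃ a : E, IsLatticeAtom a ∧ a ≤ x

/-- The norm is order continuous: every downward directed net decreasing to `0`
converges to `0` in norm. -/
def HasOrderContinuousNorm (E : Type*) [NormedAddCommGroup E] [Lattice E] [HasSolidNorm E] [IsOrderedAddMonoid E] : Prop :=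
  ∀ (ι : Type) [Preorder ι] [IsDirected ι (· ≤ ·)] (x : ι → E),
    Antitone x → IsGLB (Set.range x) 0 → Tendsto (fun i => ‖x i‖) atTop (𝓝 0)

namespace Stmt0Aux

abbrev E := ZeroAtInftyContinuousMap ℕ ℝ

/-- basis vector -/
def ee (k : ℕ) : E where
  toFun := fun m => if m = k then 1 else 0
  continuous_toFun := continuous_of_discreteTopology
  zero_at_infty' := by
    rw [Filter.cocompact_eq_cofinite, Nat.cofinite_eq_atTop]
    refine Tendsto.congr' ?_ tendsto_const_nhds
    filter_upwards [eventually_gt_atTop k] with m hm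
    simp [Nat.ne_of_gt hm |>.symm, (Nat.ne_of_gt hm)]

@[simp] lemma ee_apply (k m : ℕ) : ee k m = if m = k then 1 else 0 := rfl

lemma E_apply_le_norm (x : E) (m : ℕ) : |x m| ≤ ‖x‖ := by
  rw [← ZeroAtInftyContinuousMap.norm_toBCF_eq_norm]
  exact (x.toBCF).norm_coe_le_norm m

lemma E_norm_le (x : E) {C : ℝ} (hC : 0 ≤ C) (h : ∀ m, |x m| ≤ C) : ‖x‖ ≤ C := by
  rw [← ZeroAtInftyContinuousMap.norm_toBCF_eq_norm]
  exact (BoundedContinuousFunction.norm_le hC).2 h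

@[simp] lemma norm_ee (k : ℕ) : ‖ee k‖ = 1 := by
  refine le_antisymm (E_norm_le _ zero_le_one fun m => ?_) ?_
  · by_cases h : m = k <;> simp [h]
  · have := E_apply_le_norm (ee k) k
    simpa using this

end Stmt0Aux

namespace Stmt0Aux

open scoped Classical

variable {n : ℕ → ℕ} (hn : StrictMono n)

def Jfun (n : ℕ → ℕ) (x : E) : ℕ → ℝ := fun m =>
  if h : ∃ k, n k = m then x h.choose else 0

lemma Jfun_apply_mem (hn : StrictMono n) (x : E) (k : ℕ) : Jfun n x (n k) = x k := by
  have h : ∃ k', n k' = n k := ⟨k, rfl⟩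
  have hc : h.choose = k := hn.injective h.choose_spec
  simp only [Jfun, dif_pos h, hc]

lemma Jfun_apply_not_mem (x : E) {m : ℕ} (h : ¬ ∃ k, n k = m) : Jfun n x m = 0 := by
  simp only [Jfun, dif_neg h]

lemma Jfun_abs_le (x : E) (m : ℕ) : |Jfun n x m| ≤ ‖x‖ := by
  by_cases h : ∃ k, n k = m
  · rw [show Jfun n x m = x h.choose from dif_pos h]
    exact E_apply_le_norm x _
  · rw [Jfun_apply_not_mem x h]
    simpa using norm_nonneg x

lemma Jfun_zero_at_infty (hn : StrictMono n) (x : E) :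
    Tendsto (Jfun n x) atTop (𝓝 0) := by
  rw [Metric.tendsto_atTop]
  intro ε hε
  have hx : Tendsto (⇑x) (cocompact ℕ) (𝓝 0) := x.zero_at_infty'
  rw [Filter.cocompact_eq_cofinite, Nat.cofinite_eq_atTop, Metric.tendsto_atTop] at hx
  obtain ⟨K, hK⟩ := hx ε hε
  refine ⟨n K, fun m hm => ?_⟩
  by_cases h : ∃ k, n k = m
  · rw [show Jfun n x m = x h.choose from dif_pos h]
    have hc := h.choose_spec
    have : K ≤ h.choose := by
      by_contra hlt
      push_neg at hlt
      have := hn hlt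
      omega
    exact hK h.choose this
  · rw [Jfun_apply_not_mem x h]
    simpa [hε] using hε

def JE (hn : StrictMono n) (x : E) : E where
  toFun := Jfun n x
  continuous_toFun := continuous_of_discreteTopology
  zero_at_infty' := by rw [Filter.cocompact_eq_cofinite, Nat.cofinite_eq_atTop]; exact Jfun_zero_at_infty hn x

@[simp] lemma JE_apply (x : E) (m : ℕ) : JE hn x m = Jfun n x m := rfl

def Jop (hn : StrictMono n) : E →L[ℝ] E := by
  refine LinearMap.mkContinuous
    { toFun := JE hn
      map_add' := ?_
      map_smul' := ?_ } 1 ?_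
  · intro x y
    ext m
    simp only [JE_apply, Jfun, ZeroAtInftyContinuousMap.coe_add, Pi.add_apply]
    split <;> simp
  · intro c x
    ext m
    simp only [JE_apply, Jfun, ZeroAtInftyContinuousMap.coe_smul, Pi.smul_apply, RingHom.id_apply,
      smul_eq_mul]
    split <;> simp
  · intro x
    simp only [LinearMap.coe_mk, AddHom.coe_mk, one_mul]
    exact E_norm_le _ (norm_nonneg x) (fun m => Jfun_abs_le x m)

@[simp] lemma Jop_apply (x : E) (m : ℕ) : Jop hn x m = Jfun n x m := rfl

lemma Jop_ee (k : ℕ) : Jop hn (ee k) = ee (n k) := by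
  ext m
  rw [Jop_apply]
  by_cases h : ∃ k', n k' = m
  · obtain ⟨k', rfl⟩ := h
    rw [Jfun_apply_mem hn]
    by_cases hk : k' = k
    · simp [hk]
    · have : n k' ≠ n k := fun e => hk (hn.injective e)
      simp [hk, this]
  · rw [Jfun_apply_not_mem _ h]
    have : m ≠ n k := fun e => h ⟨k, e.symm⟩
    simp [this]

end Stmt0Aux

namespace Stmt0Aux

lemma E_sum_apply (F : Finset ℕ) (g : ℕ → E) (m : ℕ) :
    (∑ i ∈ F, g i) m = ∑ i ∈ F, g i m := by
  classical
  induction F using Finset.induction_on with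
  | empty => simp
  | insert a s h ih => simp [Finset.sum_insert h, ih]

def chi (F : Finset ℕ) : E := ∑ i ∈ F, ee i

lemma chi_apply (F : Finset ℕ) (m : ℕ) : chi F m = if m ∈ F then 1 else 0 := by
  classical
  rw [chi, E_sum_apply]
  simp [Finset.sum_ite_eq', ee_apply]

lemma chi_nonneg (F : Finset ℕ) (m : ℕ) : 0 ≤ chi F m := by
  rw [chi_apply]; split <;> norm_num

lemma chi_norm_le (F : Finset ℕ) : ‖chi F‖ ≤ 1 := by
  refine E_norm_le _ zero_le_one fun m => ?_
  rw [chi_apply]; split <;> norm_num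

/-- truncation approximation -/
lemma exists_trunc (x : E) {η : ℝ} (hη : 0 < η) :
    ∃ K₀ : ℕ, ∀ K, K₀ ≤ K → ‖x - ∑ k ∈ Finset.range K, x k • ee k‖ ≤ η := by
  have hx : Tendsto (⇑x) (cocompact ℕ) (𝓝 0) := x.zero_at_infty'
  rw [Filter.cocompact_eq_cofinite, Nat.cofinite_eq_atTop, Metric.tendsto_atTop] at hx
  obtain ⟨K₀, hK⟩ := hx η hη
  refine ⟨K₀, fun K hKK => E_norm_le _ hη.le fun m => ?_⟩
  have hs : (∑ k ∈ Finset.range K, x k • ee k) m = if m < K then x m else 0 := by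
    classical
    rw [E_sum_apply]
    simp only [ZeroAtInftyContinuousMap.coe_smul, Pi.smul_apply, ee_apply, smul_eq_mul]
    rw [Finset.sum_congr rfl (fun i _ => by rw [mul_ite, mul_one, mul_zero]),
      Finset.sum_ite_eq (Finset.range K) m x]
    simp [Finset.mem_range]
  rw [ZeroAtInftyContinuousMap.coe_sub, Pi.sub_apply, hs]
  by_cases hm : m < K
  · simp [hm]; exact hη.le
  · push_neg at hm
    have := hK m (le_trans hKK hm)
    rw [Real.dist_eq, sub_zero] at this
    rw [if_neg (not_lt.2 hm), sub_zero]
    exact this.le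

end Stmt0Aux

namespace Stmt0Aux

lemma sum_pow_max_le (j K : ℕ) :
    ∑ k ∈ Finset.range K \ {j}, ((2 : ℝ))⁻¹ ^ (max j k) ≤ 2 := by
  classical
  have hsub : Finset.range K \ {j} ⊆ Finset.range j ∪ Finset.Ico (j+1) K := by
    intro k hk
    simp only [Finset.mem_sdiff, Finset.mem_range, Finset.mem_singleton] at hk
    simp only [Finset.mem_union, Finset.mem_range, Finset.mem_Ico]
    omega
  have hpos : ∀ k : ℕ, (0:ℝ) ≤ ((2:ℝ))⁻¹ ^ (max j k) := fun k => by positivity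
  have hdisj : Disjoint (Finset.range j) (Finset.Ico (j+1) K) := by
    rw [Finset.disjoint_left]
    intro a ha hb
    simp only [Finset.mem_range] at ha
    simp only [Finset.mem_Ico] at hb
    omega
  have h1 : ∑ k ∈ Finset.range j, ((2:ℝ))⁻¹ ^ (max j k) ≤ 1 := by
    have hc : ∀ k ∈ Finset.range j, ((2:ℝ))⁻¹ ^ (max j k) = ((2:ℝ))⁻¹ ^ j := by
      intro k hk
      rw [max_eq_left (Finset.mem_range.1 hk).le]
    rw [Finset.sum_congr rfl hc, Finset.sum_const, Finset.card_range, nsmul_eq_mul]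
    have h2j : (j:ℝ) ≤ 2 ^ j := by
      exact_mod_cast (Nat.lt_two_pow_self (n := j)).le
    rw [inv_pow, ← div_eq_mul_inv, div_le_one (by positivity)]
    exact h2j
  have h2 : ∑ k ∈ Finset.Ico (j+1) K, ((2:ℝ))⁻¹ ^ (max j k) ≤ 1 := by
    have hc : ∀ k ∈ Finset.Ico (j+1) K, ((2:ℝ))⁻¹ ^ (max j k) = ((2:ℝ))⁻¹ ^ k := by
      intro k hk
      rw [max_eq_right (by have := (Finset.mem_Ico.1 hk).1; omega)]
    rw [Finset.sum_congr rfl hc, Finset.sum_Ico_eq_sum_range]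
    have : ∀ i ∈ Finset.range (K - (j+1)), ((2:ℝ))⁻¹ ^ (j + 1 + i)
        = ((2:ℝ))⁻¹ ^ (j+1) * ((2:ℝ))⁻¹ ^ i := fun i _ => pow_add _ _ _
    rw [Finset.sum_congr rfl this, ← Finset.mul_sum]
    have hg : ∑ i ∈ Finset.range (K - (j+1)), ((2:ℝ))⁻¹ ^ i ≤ 2 := by
      have := sum_geometric_two_le (K - (j+1))
      simpa [one_div] using this
    have hp : ((2:ℝ))⁻¹ ^ (j+1) ≤ 2⁻¹ := by
      calc ((2:ℝ))⁻¹ ^ (j+1) ≤ ((2:ℝ))⁻¹ ^ 1 :=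
            pow_le_pow_of_le_one (by norm_num) (by norm_num) (by omega)
        _ = 2⁻¹ := pow_one _
    calc ((2:ℝ))⁻¹ ^ (j+1) * ∑ i ∈ Finset.range (K - (j+1)), ((2:ℝ))⁻¹ ^ i
        ≤ 2⁻¹ * 2 := by
          apply mul_le_mul hp hg (by positivity) (by norm_num)
      _ = 1 := by norm_num
  calc ∑ k ∈ Finset.range K \ {j}, ((2 : ℝ))⁻¹ ^ (max j k)
      ≤ ∑ k ∈ Finset.range j ∪ Finset.Ico (j+1) K, ((2 : ℝ))⁻¹ ^ (max j k) :=
        Finset.sum_le_sum_of_subset_of_nonneg hsub (fun k _ _ => hpos k)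
    _ = (∑ k ∈ Finset.range j, ((2 : ℝ))⁻¹ ^ (max j k))
        + ∑ k ∈ Finset.Ico (j+1) K, ((2 : ℝ))⁻¹ ^ (max j k) := Finset.sum_union hdisj
    _ ≤ 1 + 1 := add_le_add h1 h2
    _ = 2 := by norm_num

lemma exists_big_coord (x : E) {η : ℝ} (hη : 0 < η) : ∃ j, ‖x‖ - η ≤ |x j| := by
  by_contra h
  push_neg at h
  have h0 : (0:ℝ) ≤ ‖x‖ - η := le_trans (abs_nonneg (x 0)) (h 0).le
  have := E_norm_le x h0 (fun m => (h m).le)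
  linarith

/-- The key selection step. -/
lemma step {Y : Type*} [NormedAddCommGroup Y] [NormedSpace ℝ Y]
    (y : ℕ → Y) (φ : ℕ → Y →L[ℝ] ℝ) (A B : ℝ)
    (hφn : ∀ m, ‖φ m‖ = 1) (hφy : ∀ m, φ m (y m) = ‖y m‖)
    (hyA : ∀ m, A ≤ ‖y m‖) (hyB : ∀ m, ‖y m‖ ≤ B)
    (hwn : ∀ ψ : Y →L[ℝ] ℝ, Tendsto (fun m => ψ (y m)) atTop (𝓝 0))
    (s : Finset ℕ) {δ : ℝ} (hδ : 0 < δ) (N : ℕ) :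
    ∃ (m : ℕ) (ψ : Y →L[ℝ] ℝ), N ≤ m ∧ ‖ψ‖ ≤ 1 ∧ (A - δ)/2 ≤ ψ (y m) ∧ ∀ i ∈ s, |ψ (y i)| ≤ δ := by
  classical
  have hB0 : (0:ℝ) ≤ B := le_trans (norm_nonneg (y 0)) (hyB 0)
  set w : ℕ → (s → ℝ) := fun m i => φ m (y i.1) with hw
  have hwmem : ∀ m, w m ∈ Metric.closedBall (0 : s → ℝ) B := by
    intro m
    rw [Metric.mem_closedBall, dist_zero_right]
    rw [pi_norm_le_iff_of_nonneg hB0]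
    intro i
    calc ‖w m i‖ ≤ ‖φ m‖ * ‖y i.1‖ := (φ m).le_opNorm _
      _ ≤ 1 * B := by
          apply mul_le_mul (le_of_eq (hφn m)) (hyB _) (norm_nonneg _) zero_le_one
      _ = B := one_mul B
  obtain ⟨L, -, σ, hσ, hσL⟩ :=
    tendsto_subseq_of_bounded Metric.isBounded_closedBall hwmem
  rw [Metric.tendsto_atTop] at hσL
  obtain ⟨i₀, hi₀⟩ := hσL (δ/2) (by positivity)
  set m' := σ i₀ with hm'
  have hM : ∃ M, ∀ m ≥ M, |(φ m') (y m)| ≤ δ := by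
    have := hwn (φ m')
    rw [Metric.tendsto_atTop] at this
    obtain ⟨M, hM⟩ := this δ hδ
    refine ⟨M, fun m hm => ?_⟩
    have := hM m hm
    rw [Real.dist_eq, sub_zero] at this
    exact this.le
  obtain ⟨M, hMs⟩ := hM
  set i₁ := max i₀ (max N M) with hi₁
  set m := σ i₁ with hmm
  have hi₁0 : i₀ ≤ i₁ := le_max_left _ _
  have hmN : N ≤ m := le_trans (le_trans (le_max_left N M) (le_max_right i₀ _)) hσ.le_apply
  have hmM : M ≤ m := le_trans (le_trans (le_max_right N M) (le_max_right i₀ _)) hσ.le_apply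
  refine ⟨m, (2⁻¹ : ℝ) • (φ m - φ m'), hmN, ?_, ?_, ?_⟩
  · rw [norm_smul (2⁻¹:ℝ) (φ m - φ m')]
    calc ‖(2⁻¹:ℝ)‖ * ‖φ m - φ m'‖ ≤ 2⁻¹ * (‖φ m‖ + ‖φ m'‖) := by
          apply mul_le_mul (by simp) (norm_sub_le _ _) (norm_nonneg _) (by norm_num)
      _ = 1 := by rw [hφn, hφn]; norm_num
  · have h1 : φ m (y m) = ‖y m‖ := hφy m
    have h2 : |(φ m') (y m)| ≤ δ := hMs m hmM
    have h3 : A ≤ ‖y m‖ := hyA m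
    rw [ContinuousLinearMap.smul_apply, ContinuousLinearMap.sub_apply, smul_eq_mul, h1]
    have := abs_le.1 h2
    linarith
  · intro i hi
    have hd1 : dist (w m) L ≤ δ/2 := (hi₀ i₁ hi₁0).le
    have hd2 : dist (w m') L ≤ δ/2 := (hi₀ i₀ le_rfl).le
    have hcoord : dist (w m ⟨i, hi⟩) (w m' ⟨i, hi⟩) ≤ δ := by
      calc dist (w m ⟨i, hi⟩) (w m' ⟨i, hi⟩) ≤ dist (w m) (w m') := dist_le_pi_dist _ _ _
        _ ≤ dist (w m) L + dist (w m') L := dist_triangle_right _ _ _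
        _ ≤ δ/2 + δ/2 := add_le_add hd1 hd2
        _ = δ := by ring
    rw [ContinuousLinearMap.smul_apply, ContinuousLinearMap.sub_apply, smul_eq_mul]
    rw [Real.dist_eq] at hcoord
    have : |φ m (y i) - φ m' (y i)| ≤ δ := hcoord
    rw [abs_mul]
    calc |(2:ℝ)⁻¹| * |φ m (y i) - φ m' (y i)| ≤ 2⁻¹ * δ := by
          apply mul_le_mul (le_of_eq (abs_of_nonneg (by norm_num))) this (abs_nonneg _)
            (by norm_num)
      _ ≤ δ := by linarith

end Stmt0Aux

namespace Stmt0Aux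

lemma exists_seq {D : Type*} [Inhabited D] (Good : ℕ → (ℕ → D) → D → Prop)
    (hkey : ∀ j v, ∃ p, Good j v p)
    (hrestrict : ∀ j (v v' : ℕ → D) p, (∀ k, k < j → v k = v' k) → Good j v p → Good j v' p) :
    ∃ g : ℕ → D, ∀ j, Good j g (g j) := by
  refine ⟨fun j => Nat.strongRec (fun j ih =>
    Classical.choose (hkey j (fun k => if h : k < j then ih k h else default))) j, fun j => ?_⟩
  beta_reduce
  rw [Nat.strongRec_eq]
  apply hrestrict j (fun k => if h : k < j then
    Nat.strongRec (fun j ih =>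
      Classical.choose (hkey j (fun k => if h : k < j then ih k h else default))) k else default)
  · intro k hk
    simp [hk]
  · exact Classical.choose_spec _

end Stmt0Aux


set_option maxHeartbeats 1000000

open Stmt0Aux


/-- If `T : c₀ → Y` is a bounded linear operator into a Banach space `Y`
which is a 0-cone isomorphism (i.e. `A‖x‖ ≤ ‖Tx‖ ≤ B‖x‖` for all `x ≥ 0`), then
`c₀` embeds isomorphically into `Y`. -/
theorem stmt0 {Y : Type*} [NormedAddCommGroup Y] [NormedSpace ℝ Y] [CompleteSpace Y]
    (T : ZeroAtInftyContinuousMap ℕ ℝ →L[ℝ] Y) (A B : ℝ) (hA : 0 < A) (hB : 0 < B)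
    (hbound : ∀ x : ZeroAtInftyContinuousMap ℕ ℝ, (∀ n, 0 ≤ x n) →
      A * ‖x‖ ≤ ‖T x‖ ∧ ‖T x‖ ≤ B * ‖x‖) :
    ∃ (f : ZeroAtInftyContinuousMap ℕ ℝ →L[ℝ] Y) (c : ℝ), 0 < c ∧
      ∀ x : ZeroAtInftyContinuousMap ℕ ℝ, c * ‖x‖ ≤ ‖f x‖ := by
  classical
  set y : ℕ → Y := fun m => T (ee m) with hy
  have hee_nonneg : ∀ m k, (0:ℝ) ≤ ee m k := by
    intro m k; rw [ee_apply]; split <;> norm_num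
  have hyA : ∀ m, A ≤ ‖y m‖ := by
    intro m
    have := (hbound (ee m) (hee_nonneg m)).1
    rwa [norm_ee, mul_one] at this
  have hyB : ∀ m, ‖y m‖ ≤ B := by
    intro m
    have := (hbound (ee m) (hee_nonneg m)).2
    rwa [norm_ee, mul_one] at this
  have hyne : ∀ m, y m ≠ 0 := by
    intro m h
    have := hyA m
    rw [h, norm_zero] at this
    linarith
  have hφ : ∀ m, ∃ gφ : Y →L[ℝ] ℝ, ‖gφ‖ = 1 ∧ gφ (y m) = ‖y m‖ :=
    fun m => exists_dual_vector ℝ (y m) (norm_ne_zero_iff.2 (hyne m))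
  set φ : ℕ → Y →L[ℝ] ℝ := fun m => Classical.choose (hφ m) with hφdef
  have hφn : ∀ m, ‖φ m‖ = 1 := fun m => (Classical.choose_spec (hφ m)).1
  have hφy : ∀ m, φ m (y m) = ‖y m‖ := fun m => (Classical.choose_spec (hφ m)).2
  have hTchi : ∀ (ψ : Y →L[ℝ] ℝ) (F : Finset ℕ), ψ (T (chi F)) = ∑ m ∈ F, ψ (y m) := by
    intro ψ F
    rw [chi, map_sum, map_sum]
  have hTchi_norm : ∀ F : Finset ℕ, ‖T (chi F)‖ ≤ B := by
    intro F
    calc ‖T (chi F)‖ ≤ B * ‖chi F‖ := (hbound (chi F) (chi_nonneg F)).2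
      _ ≤ B * 1 := by
          apply mul_le_mul le_rfl (chi_norm_le F) (norm_nonneg _) hB.le
      _ = B := mul_one B
  have hsum : ∀ ψ : Y →L[ℝ] ℝ, Summable fun m => |ψ (y m)| := by
    intro ψ
    apply summable_of_sum_le (c := ‖ψ‖ * B + ‖ψ‖ * B) (fun m => abs_nonneg _)
    intro u
    have key : ∀ F : Finset ℕ, ∑ m ∈ F, ψ (y m) ≤ ‖ψ‖ * B := by
      intro F
      calc ∑ m ∈ F, ψ (y m) = ψ (T (chi F)) := (hTchi ψ F).symm
        _ ≤ |ψ (T (chi F))| := le_abs_self _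
        _ ≤ ‖ψ‖ * ‖T (chi F)‖ := ψ.le_opNorm _
        _ ≤ ‖ψ‖ * B := by
            apply mul_le_mul le_rfl (hTchi_norm F) (norm_nonneg _) (norm_nonneg _)
    rw [← Finset.sum_filter_add_sum_filter_not u (fun m => 0 ≤ ψ (y m))]
    have h1 : ∑ m ∈ u.filter (fun m => 0 ≤ ψ (y m)), |ψ (y m)| ≤ ‖ψ‖ * B := by
      rw [Finset.sum_congr rfl (fun m hm => abs_of_nonneg (Finset.mem_filter.1 hm).2)]
      exact key _
    have h2 : ∑ m ∈ u.filter (fun m => ¬ 0 ≤ ψ (y m)), |ψ (y m)| ≤ ‖ψ‖ * B := by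
      rw [Finset.sum_congr rfl (fun m hm => abs_of_neg (by
        have := (Finset.mem_filter.1 hm).2; push_neg at this; exact this))]
      have : ∀ F : Finset ℕ, ∑ m ∈ F, (-ψ) (y m) ≤ ‖ψ‖ * B := by
        intro F
        calc ∑ m ∈ F, (-ψ) (y m) = (-ψ) (T (chi F)) := (hTchi (-ψ) F).symm
          _ ≤ |(-ψ) (T (chi F))| := le_abs_self _
          _ ≤ ‖(-ψ)‖ * ‖T (chi F)‖ := (-ψ).le_opNorm _
          _ ≤ ‖ψ‖ * B := by
              rw [norm_neg]
              apply mul_le_mul le_rfl (hTchi_norm F) (norm_nonneg _) (norm_nonneg _)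
      have := this (u.filter (fun m => ¬ 0 ≤ ψ (y m)))
      simpa using this
    linarith
  have hwn : ∀ ψ : Y →L[ℝ] ℝ, Tendsto (fun m => ψ (y m)) atTop (𝓝 0) := by
    intro ψ
    exact (tendsto_zero_iff_abs_tendsto_zero _).2 (hsum ψ).tendsto_atTop_zero
  set ε : ℝ := A / 10 with hε
  have hε0 : 0 < ε := by positivity
  -- the inductive selection
  set Good : ℕ → (ℕ → ℕ × (Y →L[ℝ] ℝ)) → ℕ × (Y →L[ℝ] ℝ) → Prop := fun j v p =>
    (∀ k, k < j → (v k).1 < p.1) ∧ ‖p.2‖ ≤ 1 ∧ (A - ε)/2 ≤ p.2 (y p.1) ∧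
      (∀ k, k < j → |p.2 (y (v k).1)| ≤ ε * 2⁻¹ ^ j) ∧
      (∀ k, k < j → |(v k).2 (y p.1)| ≤ ε * 2⁻¹ ^ j) with hGood
  have hkey : ∀ j v, ∃ p, Good j v p := by
    intro j v
    have hδ : 0 < ε * 2⁻¹ ^ j := by positivity
    have hev : ∀ᶠ m in atTop, ∀ k ∈ Finset.range j,
        ((v k).1 < m ∧ |(v k).2 (y m)| ≤ ε * 2⁻¹ ^ j) := by
      rw [Filter.eventually_all_finset]
      intro k _
      refine (eventually_gt_atTop _).and ?_
      have h2 := Metric.tendsto_atTop.1 (hwn (v k).2) (ε * 2⁻¹ ^ j) hδ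
      obtain ⟨M, hM⟩ := h2
      rw [eventually_atTop]
      refine ⟨M, fun m hm => ?_⟩
      have := hM m hm
      rw [Real.dist_eq, sub_zero] at this
      exact this.le
    obtain ⟨N, hN⟩ := eventually_atTop.1 hev
    obtain ⟨m, ψ, hmN, hψ1, hψ2, hψ3⟩ := step y φ A B hφn hφy hyA hyB hwn
      ((Finset.range j).image (fun k => (v k).1)) hδ N
    have hψ2' : (A - ε)/2 ≤ ψ (y m) := by
      refine le_trans ?_ hψ2
      have h1 : ε * 2⁻¹ ^ j ≤ ε := by
        calc ε * 2⁻¹ ^ j ≤ ε * 1 := by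
              apply mul_le_mul le_rfl (pow_le_one₀ (by norm_num) (by norm_num)) (by positivity)
                hε0.le
          _ = ε := mul_one ε
      linarith
    refine ⟨(m, ψ), fun k hk => ?_, hψ1, hψ2', fun k hk => ?_, fun k hk => ?_⟩
    · exact (hN m hmN k (Finset.mem_range.2 hk)).1
    · exact hψ3 _ (Finset.mem_image.2 ⟨k, Finset.mem_range.2 hk, rfl⟩)
    · exact (hN m hmN k (Finset.mem_range.2 hk)).2
  have hrestrict : ∀ j (v v' : ℕ → ℕ × (Y →L[ℝ] ℝ)) p,
      (∀ k, k < j → v k = v' k) → Good j v p → Good j v' p := by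
    intro j v v' p hvv' hp
    obtain ⟨h1, h2, h3, h4, h5⟩ := hp
    exact ⟨fun k hk => (hvv' k hk) ▸ h1 k hk, h2, h3,
      fun k hk => (hvv' k hk) ▸ h4 k hk, fun k hk => (hvv' k hk) ▸ h5 k hk⟩
  obtain ⟨g, hg⟩ := exists_seq Good hkey hrestrict
  set nn : ℕ → ℕ := fun j => (g j).1 with hnn
  set ψ : ℕ → Y →L[ℝ] ℝ := fun j => (g j).2 with hψ
  have hmono : StrictMono nn := fun a b h => (hg b).1 a h
  set f : ZeroAtInftyContinuousMap ℕ ℝ →L[ℝ] Y := T.comp (Jop hmono) with hf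
  refine ⟨f, A/4, by positivity, ?_⟩
  intro x
  have hψnorm : ∀ j, ‖ψ j‖ ≤ 1 := fun j => (hg j).2.1
  have hψdiag : ∀ j, (A - ε)/2 ≤ ψ j (y (nn j)) := fun j => (hg j).2.2.1
  have hback : ∀ j k, k < j → |ψ j (y (nn k))| ≤ ε * 2⁻¹ ^ j := fun j k hk =>
    (hg j).2.2.2.1 k hk
  have hfor : ∀ j k, j < k → |ψ j (y (nn k))| ≤ ε * 2⁻¹ ^ k := fun j k hk =>
    (hg k).2.2.2.2 j hk
  have main : ∀ η, 0 < η → A/4 * ‖x‖ ≤ ‖f x‖ + (A + ‖f‖) * η := by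
    intro η hη
    by_cases hxsmall : ‖x‖ < η
    · nlinarith [norm_nonneg (f x), norm_nonneg f, mul_nonneg (norm_nonneg f) hη.le]
    · push_neg at hxsmall
      obtain ⟨j, hj⟩ := exists_big_coord x hη
      obtain ⟨K₀, hK₀⟩ := exists_trunc x hη
      set K := max K₀ (j+1) with hK
      set xt : ZeroAtInftyContinuousMap ℕ ℝ := ∑ k ∈ Finset.range K, x k • ee k with hxt
      have htr : ‖x - xt‖ ≤ η := hK₀ K (le_max_left _ _)
      have hfxt : f xt = ∑ k ∈ Finset.range K, x k • y (nn k) := by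
        rw [hxt, map_sum]
        refine Finset.sum_congr rfl fun k _ => ?_
        rw [map_smul, hf, ContinuousLinearMap.comp_apply, Jop_ee]
      have hψS : ψ j (f xt) = ∑ k ∈ Finset.range K, x k * ψ j (y (nn k)) := by
        rw [hfxt, map_sum]
        exact Finset.sum_congr rfl fun k _ => by rw [map_smul, smul_eq_mul]
      have hjK : j ∈ Finset.range K := Finset.mem_range.2 (lt_of_lt_of_le (Nat.lt_succ_self j)
        (le_max_right _ _))
      have hsplit : ψ j (f xt) = (∑ k ∈ Finset.range K \ {j}, x k * ψ j (y (nn k)))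
          + x j * ψ j (y (nn j)) := by
        rw [hψS, Finset.sum_eq_sum_sdiff_singleton_add hjK]
      have hR : |∑ k ∈ Finset.range K \ {j}, x k * ψ j (y (nn k))| ≤ 2 * ε * ‖x‖ := by
        calc |∑ k ∈ Finset.range K \ {j}, x k * ψ j (y (nn k))|
            ≤ ∑ k ∈ Finset.range K \ {j}, |x k * ψ j (y (nn k))| :=
              Finset.abs_sum_le_sum_abs _ _
          _ ≤ ∑ k ∈ Finset.range K \ {j}, ‖x‖ * (ε * 2⁻¹ ^ (max j k)) := by
              refine Finset.sum_le_sum fun k hk => ?_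
              rw [abs_mul]
              have hkj : k ≠ j := by
                have := (Finset.mem_sdiff.1 hk).2
                simpa using this
              have hψk : |ψ j (y (nn k))| ≤ ε * 2⁻¹ ^ (max j k) := by
                rcases lt_or_gt_of_ne hkj with h | h
                · rw [max_eq_left h.le]; exact hback j k h
                · rw [max_eq_right h.le]; exact hfor j k h
              exact mul_le_mul (E_apply_le_norm x k) hψk (abs_nonneg _) (norm_nonneg _)
          _ = ‖x‖ * ε * ∑ k ∈ Finset.range K \ {j}, 2⁻¹ ^ (max j k) := by
              rw [Finset.mul_sum]
              exact Finset.sum_congr rfl fun k _ => by ring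
          _ ≤ ‖x‖ * ε * 2 := by
              apply mul_le_mul le_rfl (sum_pow_max_le j K) (Finset.sum_nonneg fun k _ => by
                positivity) (by positivity)
          _ = 2 * ε * ‖x‖ := by ring
      have haj : (‖x‖ - η) * ((A - ε)/2) ≤ |x j * ψ j (y (nn j))| := by
        rw [abs_mul]
        have hψ0 : (0:ℝ) ≤ (A - ε)/2 := by rw [hε]; linarith
        have habs : |ψ j (y (nn j))| = ψ j (y (nn j)) :=
          abs_of_nonneg (le_trans hψ0 (hψdiag j))
        rw [habs]
        apply mul_le_mul hj (hψdiag j) hψ0 (abs_nonneg _)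
      have hlow : (‖x‖ - η) * ((A - ε)/2) - 2 * ε * ‖x‖ ≤ |ψ j (f xt)| := by
        set R : ℝ := ∑ k ∈ Finset.range K \ {j}, x k * ψ j (y (nn k)) with hRdef
        have heq : x j * ψ j (y (nn j)) = ψ j (f xt) - R := by rw [hsplit]; ring
        have habs2 : |x j * ψ j (y (nn j))| ≤ |ψ j (f xt)| + |R| := by
          rw [heq, sub_eq_add_neg]
          exact (abs_add_le _ _).trans (by rw [abs_neg])
        linarith
      have hup : |ψ j (f xt)| ≤ ‖f x‖ + ‖f‖ * η := by
        calc |ψ j (f xt)| ≤ ‖ψ j‖ * ‖f xt‖ := (ψ j).le_opNorm _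
          _ ≤ 1 * ‖f xt‖ := by
              apply mul_le_mul (hψnorm j) le_rfl (norm_nonneg _) zero_le_one
          _ = ‖f xt‖ := one_mul _
          _ = ‖f x - f (x - xt)‖ := by rw [map_sub]; congr 1; abel
          _ ≤ ‖f x‖ + ‖f (x - xt)‖ := norm_sub_le _ _
          _ ≤ ‖f x‖ + ‖f‖ * η := by
              have := f.le_opNorm (x - xt)
              have h2 : ‖f‖ * ‖x - xt‖ ≤ ‖f‖ * η :=
                mul_le_mul_of_nonneg_left htr (norm_nonneg f)
              linarith
      rw [hε] at hlow
      nlinarith [mul_pos hA hη]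
  by_contra hcon
  push_neg at hcon
  have hden : (0:ℝ) < A + ‖f‖ + 1 := by positivity
  set η : ℝ := (A/4 * ‖x‖ - ‖f x‖) / (A + ‖f‖ + 1) with hηdef
  have hη : 0 < η := div_pos (by linarith) hden
  have hPη : (A + ‖f‖ + 1) * η = A/4 * ‖x‖ - ‖f x‖ := by
    rw [hηdef, mul_div_cancel₀]
    exact ne_of_gt hden
  have hexp : (A + ‖f‖ + 1) * η = (A + ‖f‖) * η + η := by ring
  have := main η hη
  linarith
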